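/- Let p be an offspring distribution on ℕ with probability generating function f(s) = ∑_{k=0}^∞ p(k)·s^k, and suppose the process is supercritical, i.e. the mean offspring number m = ∑_{k=0}^∞ k·p(k) (valued in [0,∞]) satisfies m > 1. Let q := inf { s ∈ [0,1] : f(s) = s } be the extinction probability. Then ∑_{k=0}^∞ (k+1)·p(k+1)·q^k < 1. In other words, the mean of the offspring distribution of the process conditioned on extinction, which equals f'(q), is strictly less than one: the conditioned process is subcritical. -/

import Mathlib

open scoped NNReal ENNReal

/-- A supercritical offspring distribution (mean `m > 1`), conditioned on
extinction, has mean `f'(q) = ∑ (k+1) p(k+1) qᵏ < 1`, where `q` is the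
extinction probability, i.e. the least fixed point of the generating
function `f` in `[0,1]`. -/
theorem supercritical_conditioned_mean_lt_one
    (p : ℕ → ℝ≥0) (hp : ∑' k, (p k : ℝ) = 1)
    (f : ℝ → ℝ) (hf : ∀ s, f s = ∑' k, (p k : ℝ) * s ^ k)
    (hm : 1 < ∑' k : ℕ, (k : ℝ≥0∞) * (p k : ℝ≥0∞))
    (q : ℝ) (hq : q = sInf {s | s ∈ Set.Icc (0 : ℝ) 1 ∧ f s = s}) :
    ∑' k : ℕ, ((k : ℝ≥0∞) + 1) * (p (k + 1) : ℝ≥0∞) * (ENNReal.ofReal q) ^ k < 1 := by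
  have hP0 : ∀ k, (0:ℝ) ≤ (p k : ℝ) := fun k => (p k).coe_nonneg
  have hPsum : Summable fun k => (p k : ℝ) := by
    by_contra h
    rw [tsum_eq_zero_of_not_summable h] at hp
    norm_num at hp
  have hsum_pow : ∀ s : ℝ, 0 ≤ s → s ≤ 1 → Summable (fun k => (p k : ℝ) * s ^ k) := by
    intro s h0 h1
    refine Summable.of_nonneg_of_le (fun k => ?_) (fun k => ?_) hPsum
    · exact mul_nonneg (hP0 k) (pow_nonneg h0 k)
    · exact mul_le_of_le_one_right (hP0 k) (pow_le_one₀ h0 h1)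
  have hcont : ContinuousOn f (Set.Icc (0:ℝ) 1) := by
    have hc : ContinuousOn (fun x : ℝ => ∑' k, (p k : ℝ) * x ^ k) (Set.Icc (0:ℝ) 1) := by
      refine continuousOn_tsum (fun i => ((continuous_const.mul (continuous_pow i)).continuousOn))
        hPsum (fun n x hx => ?_)
      rw [Real.norm_eq_abs, abs_mul, abs_of_nonneg (hP0 n), abs_pow,
        abs_of_nonneg hx.1]
      exact mul_le_of_le_one_right (hP0 n) (pow_le_one₀ hx.1 hx.2)
    exact hc.congr (fun x _ => hf x)
  have hf1 : f 1 = 1 := by rw [hf]; simpa using hp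
  set S := {s | s ∈ Set.Icc (0 : ℝ) 1 ∧ f s = s} with hS
  have hS1 : (1:ℝ) ∈ S := ⟨⟨zero_le_one, le_refl 1⟩, hf1⟩
  have hSne : S.Nonempty := ⟨1, hS1⟩
  have hSbdd : BddBelow S := ⟨0, fun x hx => hx.1.1⟩
  have hSclosed : IsClosed S := by
    have h1 : IsClosed (Set.Icc (0:ℝ) 1 ∩ (fun s => f s - s) ⁻¹' {0}) :=
      (hcont.sub continuousOn_id).preimage_isClosed_of_isClosed isClosed_Icc isClosed_singleton
    have : S = Set.Icc (0:ℝ) 1 ∩ (fun s => f s - s) ⁻¹' {0} := by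
      ext x
      simp only [hS, Set.mem_setOf_eq, Set.mem_inter_iff, Set.mem_preimage,
        Set.mem_singleton_iff, sub_eq_zero]
    rw [this]; exact h1
  have hqS : q ∈ S := hq ▸ hSclosed.csInf_mem hSne hSbdd
  have hq0 : 0 ≤ q := hqS.1.1
  have hq1' : q ≤ 1 := hqS.1.2
  have hfq : f q = q := hqS.2
  -- finite sum with mean > 1
  obtain ⟨F, hF⟩ : ∃ F : Finset ℕ, 1 < ∑ k ∈ F, (k : ℝ≥0∞) * (p k : ℝ≥0∞) := by
    rw [ENNReal.tsum_eq_iSup_sum] at hm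
    exact lt_iSup_iff.mp hm
  obtain ⟨n, hFn⟩ := F.exists_nat_subset_range
  have hn : 1 < ∑ k ∈ Finset.range n, (k:ℝ) * (p k : ℝ) := by
    have h2 : (1:ℝ≥0∞) < ∑ k ∈ Finset.range n, (k : ℝ≥0∞) * (p k : ℝ≥0∞) :=
      lt_of_lt_of_le hF (Finset.sum_le_sum_of_subset hFn)
    have h3 : ∑ k ∈ Finset.range n, (k : ℝ≥0∞) * (p k : ℝ≥0∞)
        = ((∑ k ∈ Finset.range n, (k:ℝ≥0) * p k : ℝ≥0) : ℝ≥0∞) := by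
      push_cast; ring
    rw [h3, ← ENNReal.coe_one, ENNReal.coe_lt_coe] at h2
    have h4 := NNReal.coe_lt_coe.mpr h2
    push_cast at h4
    convert h4 using 2
  set φ : ℝ → ℝ := fun s => ∑ k ∈ Finset.range n, (p k : ℝ) * ∑ j ∈ Finset.range k, s ^ j
    with hφdef
  have hφ1 : 1 < φ 1 := by
    have : φ 1 = ∑ k ∈ Finset.range n, (k:ℝ) * (p k : ℝ) := by
      refine Finset.sum_congr rfl fun k _ => ?_
      simp [mul_comm]
    rw [this]; exact hn
  have hφcont : Continuous φ := by
    apply continuous_finset_sum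
    intro k _
    exact continuous_const.mul (continuous_finset_sum _ fun j _ => continuous_pow j)
  have hev : ∀ᶠ s in nhdsWithin (1:ℝ) (Set.Iio 1), 1 < φ s ∧ s ∈ Set.Ioo (0:ℝ) 1 := by
    refine Filter.Eventually.and ?_ ?_
    · exact (hφcont.continuousAt.eventually (eventually_gt_nhds hφ1)).filter_mono
        nhdsWithin_le_nhds
    · exact Ioo_mem_nhdsLT_of_mem ⟨zero_lt_one, le_refl 1⟩
  obtain ⟨s₀, hφs₀, hs₀0, hs₀1⟩ : ∃ s₀, 1 < φ s₀ ∧ 0 < s₀ ∧ s₀ < 1 := by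
    obtain ⟨s₀, h1, h2⟩ := hev.exists
    exact ⟨s₀, h1, h2.1, h2.2⟩
  -- f s₀ < s₀
  have hfs₀ : f s₀ < s₀ := by
    have hsp := hsum_pow s₀ hs₀0.le hs₀1.le
    have h1f : 1 - f s₀ = ∑' k, ((p k:ℝ) - (p k:ℝ) * s₀ ^ k) := by
      rw [hf, ← hp, Summable.tsum_sub hPsum hsp]
    have hterm : ∀ k, (p k:ℝ) * ((1-s₀) * ∑ j ∈ Finset.range k, s₀ ^ j)
        = (p k:ℝ) - (p k:ℝ) * s₀^k := by
      intro k
      have hg : (1 - s₀) * ∑ j ∈ Finset.range k, s₀ ^ j = 1 - s₀ ^ k := by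
        linear_combination -geom_sum_mul s₀ k
      rw [hg]; ring
    have hlow : (1 - s₀) * φ s₀ ≤ 1 - f s₀ := by
      rw [h1f, hφdef]
      calc (1 - s₀) * ∑ k ∈ Finset.range n, (p k : ℝ) * ∑ j ∈ Finset.range k, s₀ ^ j
          = ∑ k ∈ Finset.range n, ((p k:ℝ) - (p k:ℝ) * s₀^k) := by
            rw [Finset.mul_sum]
            exact Finset.sum_congr rfl fun k _ => by rw [← hterm k]; ring
        _ ≤ ∑' k, ((p k:ℝ) - (p k:ℝ) * s₀ ^ k) := by
            refine Summable.sum_le_tsum _ (fun k _ => ?_) (hPsum.sub hsp)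
            have : (p k:ℝ) * s₀^k ≤ (p k:ℝ) :=
              mul_le_of_le_one_right (hP0 k) (pow_le_one₀ hs₀0.le hs₀1.le)
            linarith
    have : (1 - s₀) * 1 < (1 - s₀) * φ s₀ :=
      mul_lt_mul_of_pos_left hφs₀ (by linarith)
    nlinarith
  -- q < 1 via IVT
  have hqlt1 : q < 1 := by
    have hiv := intermediate_value_Icc' (le_of_lt hs₀0)
      ((hcont.mono (Set.Icc_subset_Icc le_rfl hs₀1.le)).sub continuousOn_id)
      (f := fun s => f s - s)
    have hf0 : 0 ≤ f 0 - 0 := by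
      rw [hf, sub_zero]
      exact tsum_nonneg fun k => mul_nonneg (hP0 k) (pow_nonneg le_rfl k)
    have h0mem : (0:ℝ) ∈ Set.Icc (f s₀ - s₀) (f 0 - 0) := ⟨by linarith, hf0⟩
    obtain ⟨c, hc, hgc⟩ := hiv h0mem
    have hcS : c ∈ S := ⟨⟨hc.1, hc.2.trans hs₀1.le⟩, by dsimp at hgc; linarith⟩
    calc q ≤ c := hq ▸ csInf_le hSbdd hcS
      _ ≤ s₀ := hc.2
      _ < 1 := hs₀1
  have h1q : (0:ℝ) < 1 - q := by linarith
  -- main estimate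
  set D : ℕ → ℝ := fun k => ((k:ℝ)+1) * (p (k+1) : ℝ) * q ^ k with hDdef
  have hD0 : ∀ k, 0 ≤ D k := fun k => by
    have := hP0 (k+1); have := pow_nonneg hq0 k; positivity
  set c : ℕ → ℝ := fun k => (p k : ℝ) * (1 - q ^ k) with hcdef
  have hc0 : ∀ k, 0 ≤ c k := fun k =>
    mul_nonneg (hP0 k) (by have := pow_le_one₀ hq0 hq1' (n := k); linarith)
  have hcsum : Summable c :=
    Summable.of_nonneg_of_le hc0 (fun k => by
      have := pow_nonneg hq0 k
      have : (p k:ℝ) * (1 - q ^ k) ≤ (p k:ℝ) * 1 :=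
        mul_le_mul_of_nonneg_left (by linarith) (hP0 k)
      simpa using this) hPsum
  have hctsum : ∑' k, c k = 1 - q := by
    have h1 : ∑' k, ((p k:ℝ) - (p k:ℝ) * q ^ k) = 1 - q := by
      rw [Summable.tsum_sub hPsum (hsum_pow q hq0 hq1'), hp, ← hf q, hfq]
    rw [← h1]
    exact tsum_congr fun k => by simp [hcdef]; ring
  have hcsum' : Summable (fun k => c (k+1)) := (summable_nat_add_iff 1).mpr hcsum
  have hshift : ∑' k, c (k+1) = 1 - q := by
    have := Summable.tsum_eq_zero_add hcsum
    rw [hctsum] at this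
    have hc00 : c 0 = 0 := by simp [hcdef]
    rw [hc00, zero_add] at this
    exact this.symm
  set d : ℕ → ℝ := fun k => (1 - q) * D k with hddef
  have hd0 : ∀ k, 0 ≤ d k := fun k => mul_nonneg h1q.le (hD0 k)
  have hdc : ∀ k, d k ≤ c (k+1) := by
    intro k
    have hg : (1 - q) * ∑ j ∈ Finset.range (k+1), q ^ j = 1 - q^(k+1) := by
      linear_combination -geom_sum_mul q (k+1)
    have hgeom : ((k:ℝ)+1) * q^k ≤ ∑ j ∈ Finset.range (k+1), q ^ j := by
      calc ((k:ℝ)+1)*q^k = ∑ _j ∈ Finset.range (k+1), q^k := by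
            rw [Finset.sum_const, Finset.card_range]; ring
        _ ≤ _ := Finset.sum_le_sum fun j hj =>
            pow_le_pow_of_le_one hq0 hq1' (Nat.lt_succ_iff.mp (Finset.mem_range.mp hj))
    have step : (p (k+1):ℝ) * ((1-q) * (((k:ℝ)+1) * q^k))
        ≤ (p (k+1):ℝ) * ((1-q) * ∑ j ∈ Finset.range (k+1), q^j) :=
      mul_le_mul_of_nonneg_left (mul_le_mul_of_nonneg_left hgeom h1q.le) (hP0 _)
    rw [hg] at step
    calc d k = (p (k+1):ℝ) * ((1-q) * (((k:ℝ)+1) * q^k)) := by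
          simp only [hddef, hDdef]; ring
      _ ≤ (p (k+1):ℝ) * (1 - q^(k+1)) := step
      _ = c (k+1) := by simp [hcdef]
  have hdsum : Summable d := Summable.of_nonneg_of_le hd0 hdc hcsum'
  -- strict index
  obtain ⟨j, hj⟩ : ∃ j : ℕ, 0 < p (j+2) := by
    by_contra h
    push_neg at h
    have hz : ∀ k, 2 ≤ k → p k = 0 := by
      intro k hk
      obtain ⟨j, rfl⟩ := Nat.exists_eq_add_of_le hk
      simpa [add_comm] using le_antisymm (h j) zero_le
    have hsingle : ∑' k:ℕ, (k:ℝ≥0∞) * (p k:ℝ≥0∞) = (p 1 : ℝ≥0∞) := by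
      rw [tsum_eq_single 1 ?_]
      · simp
      · intro b hb
        match b, hb with
        | 0, _ => simp
        | (m+2), _ => rw [hz (m+2) (by omega)]; simp
    rw [hsingle] at hm
    have hp1 : (p 1 : ℝ) ≤ 1 := hp ▸ Summable.le_tsum hPsum 1 (fun j _ => hP0 j)
    have : (p 1 : ℝ≥0∞) ≤ 1 := by
      rw [← ENNReal.coe_one, ENNReal.coe_le_coe]
      exact_mod_cast hp1
    exact absurd hm (not_lt.mpr this)
  have hstrict : d (j+1) < c (j+1+1) := by
    have hgs : ((j:ℝ)+2) * q^(j+1) < ∑ r ∈ Finset.range (j+2), q^r := by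
      have hlt := Finset.sum_lt_sum (s := Finset.range (j+2))
        (f := fun _ => q^(j+1)) (g := fun r => q^r)
        (fun r hr => pow_le_pow_of_le_one hq0 hq1'
          (Nat.lt_succ_iff.mp (Finset.mem_range.mp hr)))
        ⟨0, Finset.mem_range.mpr (by omega), by
          simpa using pow_lt_one₀ hq0 hqlt1 (Nat.succ_ne_zero j)⟩
      calc ((j:ℝ)+2) * q^(j+1) = ∑ _r ∈ Finset.range (j+2), q^(j+1) := by
            rw [Finset.sum_const, Finset.card_range]; ring
        _ < _ := hlt
    have hg : (1 - q) * ∑ r ∈ Finset.range (j+2), q^r = 1 - q^(j+2) := by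
      linear_combination -geom_sum_mul q (j+2)
    have hPj : (0:ℝ) < (p (j+2) : ℝ) := hj
    have key := mul_lt_mul_of_pos_left (mul_lt_mul_of_pos_left hgs h1q) hPj
    rw [hg] at key
    calc d (j+1) = (p (j+2):ℝ) * ((1-q) * (((j:ℝ)+2) * q^(j+1))) := by
          simp only [hddef, hDdef]; push_cast; ring
      _ < (p (j+2):ℝ) * (1 - q^(j+2)) := key
      _ = c (j+1+1) := by simp [hcdef]
  have htsum_d_lt : ∑' k, d k < 1 - q := by
    rw [← hshift]
    exact Summable.tsum_lt_tsum hdc hstrict hdsum hcsum'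
  have hDsum : Summable D := by
    have h := hdsum.mul_left (1-q)⁻¹
    refine h.congr fun k => ?_
    simp only [hddef]
    field_simp
  have hDlt : ∑' k, D k < 1 := by
    have h2 : (1-q) * ∑' k, D k < (1-q) * 1 := by
      rw [mul_one, ← tsum_mul_left]
      exact htsum_d_lt
    exact lt_of_mul_lt_mul_left (by linarith [h2]) h1q.le
  have hterm : ∀ k:ℕ, ((k : ℝ≥0∞) + 1) * (p (k + 1) : ℝ≥0∞) * (ENNReal.ofReal q) ^ k
      = ENNReal.ofReal (D k) := by
    intro k
    simp only [hDdef]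
    rw [ENNReal.ofReal_mul (by positivity), ENNReal.ofReal_mul (by positivity),
      ENNReal.ofReal_pow hq0, ENNReal.ofReal_coe_nnreal]
    congr 1
    congr 1
    rw [ENNReal.ofReal_add (by positivity) zero_le_one, ENNReal.ofReal_natCast,
      ENNReal.ofReal_one]
  calc ∑' k : ℕ, ((k : ℝ≥0∞) + 1) * (p (k + 1) : ℝ≥0∞) * (ENNReal.ofReal q) ^ k
      = ∑' k, ENNReal.ofReal (D k) := tsum_congr hterm
    _ = ENNReal.ofReal (∑' k, D k) := (ENNReal.ofReal_tsum_of_nonneg hD0 hDsum).symm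
    _ < 1 := ENNReal.ofReal_lt_one.mpr hDlt
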